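/- Let F ∈ 𝒮(𝒰, 𝒴) be a Schur class function, and suppose F has a co-isometric realization {α, β, γ, δ} with state space 𝒳: the system matrix M = [[δ, γ],[β, α]] : 𝒰 ⊕ 𝒳 → 𝒴 ⊕ 𝒳 satisfies M M* = I and F(λ) = δ + λ γ (I − λα)⁻¹ β for all |λ| < 1. Then F has an observable co-isometric realization with the same δ: there exist a Hilbert space 𝒳₀ and operators α₀ : 𝒳₀ → 𝒳₀, β₀ : 𝒰 → 𝒳₀, γ₀ : 𝒳₀ → 𝒴 such that [[δ, γ₀],[β₀, α₀]] is a co-isometry, ⋂ₙ ker(γ₀ α₀ⁿ) = {0}, and F(λ) = δ + λ γ₀ (I − λα₀)⁻¹ β₀ for all |λ| < 1. -/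

import Mathlib

/- Statement 4: If a Schur class function F ∈ 𝒮(𝒰, 𝒴) has a co-isometric realization
{α, β, γ, δ} (system matrix M = [[δ, γ],[β, α]] with M M* = I, expressed blockwise),
then F has an observable co-isometric realization with the same δ. -/

open ContinuousLinearMap

noncomputable section

universe u v w

variable (𝒰 : Type u) (𝒴 : Type v)
  [NormedAddCommGroup 𝒰] [InnerProductSpace ℂ 𝒰] [CompleteSpace 𝒰]
  [NormedAddCommGroup 𝒴] [InnerProductSpace ℂ 𝒴] [CompleteSpace 𝒴]

/-- An observable co-isometric realization of an operator-valued function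
`F : ℂ → (𝒰 →L[ℂ] 𝒴)`, with state space in universe `w`. -/
structure ObsCoisometricRealization (F : ℂ → (𝒰 →L[ℂ] 𝒴)) : Type (max u v (w + 1)) where
  /-- the state space -/
  𝒳 : Type w
  [instN : NormedAddCommGroup 𝒳]
  [instI : InnerProductSpace ℂ 𝒳]
  [instC : CompleteSpace 𝒳]
  α : 𝒳 →L[ℂ] 𝒳
  β : 𝒰 →L[ℂ] 𝒳
  γ : 𝒳 →L[ℂ] 𝒴
  δ : 𝒰 →L[ℂ] 𝒴
  /-- the system matrix `[[δ, γ],[β, α]]` is a co-isometry: `M M* = I` blockwise -/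
  coiso₁₁ : δ.comp (adjoint δ) + γ.comp (adjoint γ) = 1
  coiso₁₂ : δ.comp (adjoint β) + γ.comp (adjoint α) = 0
  coiso₂₁ : β.comp (adjoint δ) + α.comp (adjoint γ) = 0
  coiso₂₂ : β.comp (adjoint β) + α.comp (adjoint α) = 1
  /-- observability: ⋂ₙ ker (γ αⁿ) = {0} -/
  observable : ∀ x : 𝒳, (∀ n : ℕ, γ ((α ^ n) x) = 0) → x = 0
  /-- realization of `F` on the open unit disc -/
  realizes : ∀ z : ℂ, ‖z‖ < 1 →
    IsUnit (1 - z • α) ∧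
      F z = δ + z • (γ.comp ((Ring.inverse (1 - z • α)).comp β))

set_option maxHeartbeats 2000000 in
theorem coisometric_realization_to_observable
    (𝒳 : Type w) [NormedAddCommGroup 𝒳] [InnerProductSpace ℂ 𝒳] [CompleteSpace 𝒳]
    (F : ℂ → (𝒰 →L[ℂ] 𝒴))
    (α : 𝒳 →L[ℂ] 𝒳) (β : 𝒰 →L[ℂ] 𝒳) (γ : 𝒳 →L[ℂ] 𝒴) (δ : 𝒰 →L[ℂ] 𝒴)
    -- the system matrix [[δ, γ],[β, α]] is a co-isometry (M M* = I, blockwise)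
    (h₁₁ : δ.comp (adjoint δ) + γ.comp (adjoint γ) = 1)
    (h₁₂ : δ.comp (adjoint β) + γ.comp (adjoint α) = 0)
    (h₂₁ : β.comp (adjoint δ) + α.comp (adjoint γ) = 0)
    (h₂₂ : β.comp (adjoint β) + α.comp (adjoint α) = 1)
    -- {α, β, γ, δ} is a realization of F on the open unit disc
    (hreal : ∀ z : ℂ, ‖z‖ < 1 →
      IsUnit (1 - z • α) ∧
        F z = δ + z • (γ.comp ((Ring.inverse (1 - z • α)).comp β))) :
    ∃ R : ObsCoisometricRealization.{u, v, w} 𝒰 𝒴 F, R.δ = δ := by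
  classical
  -- the non-observable subspace
  set N : Submodule ℂ 𝒳 := ⨅ n : ℕ, LinearMap.ker (γ.comp (α ^ n) : 𝒳 →ₗ[ℂ] 𝒴) with hNdef
  have hmemN : ∀ x : 𝒳, x ∈ N ↔ ∀ n : ℕ, γ ((α ^ n) x) = 0 := by
    intro x
    simp [hNdef, Submodule.mem_iInf, LinearMap.mem_ker, Module.End.pow_apply]
  have hNclosed : IsClosed (N : Set 𝒳) := by
    have h : (N : Set 𝒳) = ⋂ n : ℕ, (LinearMap.ker (γ.comp (α ^ n) : 𝒳 →ₗ[ℂ] 𝒴) : Set 𝒳) := by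
      simp [hNdef]
    rw [h]
    exact isClosed_iInter fun n => isClosed_ker (γ.comp (α ^ n))
  haveI : CompleteSpace N := hNclosed.completeSpace_coe
  have hNγ : ∀ x ∈ N, γ x = 0 := by
    intro x hx
    have h := (hmemN x).1 hx 0
    simpa using h
  have hNα : ∀ x ∈ N, α x ∈ N := by
    intro x hx
    refine (hmemN _).2 fun n => ?_
    have h := (hmemN x).1 hx (n + 1)
    rw [pow_succ] at h
    simpa [ContinuousLinearMap.mul_apply] using h
  set P : 𝒳 →L[ℂ] ↥Nᗮ := Submodule.orthogonalProjectionOnto Nᗮ with hPdef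
  set J : ↥Nᗮ →L[ℂ] 𝒳 := Nᗮ.subtypeL with hJdef
  have hsub : ∀ x : 𝒳, x - J (P x) ∈ N := by
    intro x
    have h1 : x - (Submodule.orthogonalProjectionOnto Nᗮ x : 𝒳) ∈ Nᗮᗮ :=
      Submodule.sub_starProjection_mem_orthogonal (K := Nᗮ) x
    rw [Submodule.orthogonal_orthogonal] at h1
    simpa [hPdef, hJdef] using h1
  have hPJ : ∀ y : ↥Nᗮ, P (J y) = y := fun y =>
    Submodule.orthogonalProjectionOnto_mem_subspace_eq_self y
  have hfix : ∀ x ∈ Nᗮ, J (P x) = x := by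
    intro x hx
    have h := hPJ ⟨x, hx⟩
    have h2 := congrArg (fun t : ↥Nᗮ => (t : 𝒳)) h
    simpa [hJdef] using h2
  have hγQ : ∀ x : 𝒳, γ (J (P x)) = γ x := by
    intro x
    have h0 := hNγ _ (hsub x)
    rw [map_sub, sub_eq_zero] at h0
    exact h0.symm
  have hPαQ : ∀ x : 𝒳, P (α (J (P x))) = P (α x) := by
    intro x
    have h1 : α x - α (J (P x)) ∈ N := by
      have := hNα _ (hsub x)
      rwa [map_sub] at this
    have h2 : P (α x - α (J (P x))) = 0 := by
      refine Submodule.orthogonalProjectionOnto_apply_of_mem_orthogonal ?_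
      exact Submodule.le_orthogonal_orthogonal N h1
    rw [map_sub, sub_eq_zero] at h2
    exact h2.symm
  have hγstar : ∀ y : 𝒴, (adjoint γ) y ∈ Nᗮ := by
    intro y
    rw [Submodule.mem_orthogonal]
    intro u hu
    rw [adjoint_inner_right, hNγ u hu, inner_zero_left]
  have hαstar : ∀ x ∈ Nᗮ, (adjoint α) x ∈ Nᗮ := by
    intro x hx
    rw [Submodule.mem_orthogonal]
    intro u hu
    rw [adjoint_inner_right]
    exact (Submodule.mem_orthogonal N x).1 hx _ (hNα u hu)
  -- the compressed system
  set α₀ : ↥Nᗮ →L[ℂ] ↥Nᗮ := (P.comp α).comp J with hα₀def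
  set β₀ : 𝒰 →L[ℂ] ↥Nᗮ := P.comp β with hβ₀def
  set γ₀ : ↥Nᗮ →L[ℂ] 𝒴 := γ.comp J with hγ₀def
  have hadjJ : adjoint J = P := by rw [hJdef, hPdef]; exact Nᗮ.adjoint_subtypeL
  have hadjP : adjoint P = J := by rw [hJdef, hPdef]; exact Nᗮ.adjoint_orthogonalProjection
  have hadjα₀ : adjoint α₀ = (P.comp (adjoint α)).comp J := by
    rw [hα₀def, adjoint_comp, adjoint_comp, hadjJ, hadjP]; rfl
  have hadjβ₀ : adjoint β₀ = (adjoint β).comp J := by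
    rw [hβ₀def, adjoint_comp, hadjP]
  have hadjγ₀ : adjoint γ₀ = P.comp (adjoint γ) := by
    rw [hγ₀def, adjoint_comp, hadjJ]
  -- powers of α₀ intertwine with powers of α modulo N
  have hpow : ∀ (n : ℕ) (u : ↥Nᗮ), J ((α₀ ^ n) u) - (α ^ n) (J u) ∈ N := by
    intro n
    induction n with
    | zero => intro u; simp
    | succ n ih =>
      intro u
      have h1 : (α₀ ^ (n + 1)) u = α₀ ((α₀ ^ n) u) := by
        rw [pow_succ']
        simp [ContinuousLinearMap.mul_apply]
      have h2 : (α ^ (n + 1)) (J u) = α ((α ^ n) (J u)) := by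
        rw [pow_succ']
        simp [ContinuousLinearMap.mul_apply]
      rw [h1, h2]
      have key : J (α₀ ((α₀ ^ n) u)) - α ((α ^ n) (J u)) =
          -(α (J ((α₀ ^ n) u)) - J (P (α (J ((α₀ ^ n) u)))))
            + α (J ((α₀ ^ n) u) - (α ^ n) (J u)) := by
        simp only [hα₀def, ContinuousLinearMap.comp_apply, map_sub, map_neg]
        abel
      rw [key]
      exact N.add_mem (N.neg_mem (hsub _)) (hNα _ (ih u))
  refine ⟨{ 𝒳 := ↥Nᗮ, α := α₀, β := β₀, γ := γ₀, δ := δ, coiso₁₁ := ?_, coiso₁₂ := ?_, coiso₂₁ := ?_, coiso₂₂ := ?_, observable := ?_, realizes := ?_ }, rfl⟩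
  · -- coiso₁₁
    ext y
    have h := ContinuousLinearMap.ext_iff.1 h₁₁ y
    simp only [ContinuousLinearMap.add_apply, ContinuousLinearMap.comp_apply,
      ContinuousLinearMap.one_apply] at h ⊢
    rw [hadjγ₀]
    simp only [hγ₀def, ContinuousLinearMap.comp_apply]
    rw [hγQ]
    exact h
  · -- coiso₁₂
    ext u
    have h := ContinuousLinearMap.ext_iff.1 h₁₂ (J u)
    simp only [ContinuousLinearMap.add_apply, ContinuousLinearMap.comp_apply,
      ContinuousLinearMap.zero_apply] at h ⊢
    rw [hadjβ₀, hadjα₀]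
    simp only [hγ₀def, ContinuousLinearMap.comp_apply]
    rw [hγQ]
    exact h
  · -- coiso₂₁
    ext y
    have h := ContinuousLinearMap.ext_iff.1 h₂₁ y
    simp only [ContinuousLinearMap.add_apply, ContinuousLinearMap.comp_apply,
      ContinuousLinearMap.zero_apply] at h ⊢
    rw [hadjγ₀]
    simp only [hα₀def, hβ₀def, ContinuousLinearMap.comp_apply]
    rw [hfix _ (hγstar y), ← map_add, h, map_zero]
  · -- coiso₂₂
    ext u
    have h := ContinuousLinearMap.ext_iff.1 h₂₂ (J u)
    simp only [ContinuousLinearMap.add_apply, ContinuousLinearMap.comp_apply,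
      ContinuousLinearMap.one_apply] at h ⊢
    rw [hadjβ₀, hadjα₀]
    simp only [hα₀def, hβ₀def, ContinuousLinearMap.comp_apply]
    have hmem : (J u : 𝒳) ∈ Nᗮ := by
      rw [hJdef]; exact (u : ↥Nᗮ).2
    rw [hfix _ (hαstar _ hmem), ← map_add, h]
    exact congrArg Subtype.val (hPJ u)
  · -- observability
    intro u hu
    have hJu : (J u : 𝒳) ∈ N := by
      refine (hmemN _).2 fun n => ?_
      have h1 := hNγ _ (hpow n u)
      rw [map_sub, sub_eq_zero] at h1
      have h2 : γ (J ((α₀ ^ n) u)) = γ₀ ((α₀ ^ n) u) := by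
        simp [hγ₀def]
      rw [← h1, h2, hu n]
    have hJu2 : (J u : 𝒳) ∈ Nᗮ := by rw [hJdef]; exact u.2
    have : (J u : 𝒳) = 0 := by
      have h0 := (Submodule.mem_orthogonal N _).1 hJu2 _ hJu
      rwa [inner_self_eq_zero] at h0
    have : (u : 𝒳) = 0 := by simpa [hJdef] using this
    exact Subtype.ext this
  · -- realization
    intro z hz
    obtain ⟨hA, hFz⟩ := hreal z hz
    -- norm estimates
    have hαnorm : ‖α‖ ≤ 1 := by
      have hadj : ‖adjoint α‖ ≤ 1 := by
        refine ContinuousLinearMap.opNorm_le_bound _ zero_le_one fun y => ?_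
        rw [one_mul]
        have h := ContinuousLinearMap.ext_iff.1 h₂₂ y
        simp only [ContinuousLinearMap.add_apply, ContinuousLinearMap.comp_apply,
          ContinuousLinearMap.one_apply] at h
        have hin : (inner ℂ y y : ℂ) = inner ℂ (β ((adjoint β) y)) y + inner ℂ (α ((adjoint α) y)) y := by
          rw [← inner_add_left, h]
        have hb : (inner ℂ (β ((adjoint β) y)) y : ℂ) = inner ℂ ((adjoint β) y) ((adjoint β) y) := by
          rw [← adjoint_inner_right]
        have ha : (inner ℂ (α ((adjoint α) y)) y : ℂ) = inner ℂ ((adjoint α) y) ((adjoint α) y) := by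
          rw [← adjoint_inner_right]
        rw [hb, ha, inner_self_eq_norm_sq_to_K, inner_self_eq_norm_sq_to_K,
          inner_self_eq_norm_sq_to_K] at hin
        have hre : ‖y‖ ^ 2 = ‖(adjoint β) y‖ ^ 2 + ‖(adjoint α) y‖ ^ 2 := by
          exact_mod_cast hin
        nlinarith [norm_nonneg ((adjoint β) y), norm_nonneg ((adjoint α) y), norm_nonneg y,
          sq_nonneg (‖(adjoint α) y‖ - ‖y‖)]
      calc ‖α‖ = ‖adjoint α‖ := (adjoint.norm_map α).symm
        _ ≤ 1 := hadj
    have hα₀norm : ‖α₀‖ ≤ 1 := by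
      refine ContinuousLinearMap.opNorm_le_bound _ zero_le_one fun u => ?_
      rw [one_mul]
      have h1 : ‖α₀ u‖ ≤ ‖α (J u)‖ := by
        rw [hα₀def]
        simp only [ContinuousLinearMap.comp_apply]
        calc ‖P (α (J u))‖ ≤ ‖P‖ * ‖α (J u)‖ := P.le_opNorm _
          _ ≤ 1 * ‖α (J u)‖ := by
              have := Submodule.orthogonalProjectionOnto_norm_le Nᗮ
              exact mul_le_mul_of_nonneg_right (by rw [hPdef]; exact this) (norm_nonneg _)
          _ = ‖α (J u)‖ := one_mul _
      have h2 : ‖α (J u)‖ ≤ ‖J u‖ := by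
        calc ‖α (J u)‖ ≤ ‖α‖ * ‖J u‖ := α.le_opNorm _
          _ ≤ 1 * ‖J u‖ := mul_le_mul_of_nonneg_right hαnorm (norm_nonneg _)
          _ = ‖J u‖ := one_mul _
      have h3 : ‖J u‖ = ‖u‖ := by simp [hJdef]
      linarith
    have hzα₀ : ‖z • α₀‖ < 1 := by
      calc ‖z • α₀‖ ≤ ‖z‖ * ‖α₀‖ := ContinuousLinearMap.opNorm_smul_le _ _
        _ ≤ ‖z‖ * 1 := mul_le_mul_of_nonneg_left hα₀norm (norm_nonneg z)
        _ = ‖z‖ := mul_one _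
        _ < 1 := hz
    have hA₀ : IsUnit (1 - z • α₀) := ⟨Units.oneSub (z • α₀) hzα₀, rfl⟩
    refine ⟨hA₀, ?_⟩
    rw [hFz]
    congr 1
    congr 1
    -- intertwining
    have hPA : ∀ x : 𝒳, (1 - z • α₀) (P x) = P ((1 - z • α) x) := by
      intro x
      simp only [ContinuousLinearMap.sub_apply, ContinuousLinearMap.smul_apply,
        ContinuousLinearMap.one_apply, map_sub, map_smul]
      congr 1
      congr 1
      rw [hα₀def]
      simp only [ContinuousLinearMap.comp_apply]
      exact hPαQ x
    have hinvcomm : ∀ x : 𝒳,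
        (Ring.inverse (1 - z • α₀)) (P ((1 - z • α) x)) = P x := by
      intro x
      rw [← hPA]
      have : (Ring.inverse (1 - z • α₀)) ((1 - z • α₀) (P x))
          = ((Ring.inverse (1 - z • α₀)) * (1 - z • α₀)) (P x) := rfl
      rw [this, Ring.inverse_mul_cancel _ hA₀, ContinuousLinearMap.one_apply]
    have hinv : ∀ x : 𝒳,
        (Ring.inverse (1 - z • α₀)) (P x) = P ((Ring.inverse (1 - z • α)) x) := by
      intro x
      have h1 : (1 - z • α) ((Ring.inverse (1 - z • α)) x) = x := by
        have : (1 - z • α) ((Ring.inverse (1 - z • α)) x)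
            = ((1 - z • α) * Ring.inverse (1 - z • α)) x := rfl
        rw [this, Ring.mul_inverse_cancel _ hA, ContinuousLinearMap.one_apply]
      have := hinvcomm ((Ring.inverse (1 - z • α)) x)
      rwa [h1] at this
    ext w
    simp only [ContinuousLinearMap.comp_apply]
    rw [hβ₀def]
    simp only [ContinuousLinearMap.comp_apply]
    rw [hinv, hγ₀def]
    simp only [ContinuousLinearMap.comp_apply]
    exact (hγQ _).symm


end
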